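/- Let n ≥ 10 be odd and let T be a tree on n vertices. Then λ2(T) ≤ √((n−3)/2), and equality holds for the caterpillar T((n−3)/2, 0, (n−3)/2) obtained from a path u v w by attaching (n−3)/2 leaves at u and (n−3)/2 leaves at w. -/

import Mathlib

open Classical
attribute [local instance] Classical.propDecidable

noncomputable section

/-- The list of eigenvalues of the adjacency matrix of `G` (with multiplicity),
sorted in ascending order. -/
def eigList {V : Type*} [Fintype V] [DecidableEq V] (G : SimpleGraph V) : List ℝ :=
  (Finset.univ.val.map (Matrix.IsHermitian.eigenvalues
    (by
      rw [Matrix.IsHermitian]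
      ext i j
      simp [Matrix.conjTranspose_apply, G.adj_comm j i] : (G.adjMatrix ℝ).IsHermitian))).sort (· ≤ ·)

/-- `lam G k` is the `k`-th largest eigenvalue (1-indexed, with multiplicity)
of the adjacency matrix of `G`; so `lam G 1 = λ₁(G)`, `lam G 2 = λ₂(G)`, etc. -/
def lam {V : Type*} [Fintype V] [DecidableEq V] (G : SimpleGraph V) (k : ℕ) : ℝ :=
  (eigList G).getD (Fintype.card V - k) 0

/-- `Phi G x = det (x I - A(G))`: the characteristic polynomial of the adjacency
matrix of `G`, evaluated at `x`. -/
def Phi {V : Type*} [Fintype V] [DecidableEq V] (G : SimpleGraph V) (x : ℝ) : ℝ :=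
  ((G.adjMatrix ℝ).charpoly).eval x

/-- The graph `G - a` obtained by deleting the vertex `a`. -/
def delVert {V : Type*} (G : SimpleGraph V) (a : V) : SimpleGraph {v : V // v ≠ a} :=
  G.induce {v : V | v ≠ a}

/-- The path graph `P_m` on `m` vertices `0 - 1 - ⋯ - (m-1)`. -/
def pathG (m : ℕ) : SimpleGraph (Fin m) :=
  SimpleGraph.fromRel (fun i j => i.val + 1 = j.val)

/-- The caterpillar `C(ℓ,r,k)`: the path `v_0 v_1 ⋯ v_{ℓ+r}` together with `k`
pendant leaves attached at the vertex `v_ℓ`. -/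
def caterpillar (l r k : ℕ) : SimpleGraph (Fin (l + r + k + 1)) :=
  SimpleGraph.fromRel (fun i j =>
    (i.val + 1 = j.val ∧ j.val ≤ l + r) ∨ (i.val = l ∧ l + r < j.val))

/-- The star `K_{1,n-1}`: vertex `0` adjacent to all other vertices. -/
def starG (n : ℕ) : SimpleGraph (Fin n) :=
  SimpleGraph.fromRel (fun i _ => i.val = 0)

/-- The double star `T(n-3,1)`: adjacent vertices `u = 0`, `v = 1`, where `u` has
the `n - 3` pendant leaves `2, …, n-2` and `v` has the single pendant leaf `n-1`. -/
def doubleStar (n : ℕ) : SimpleGraph (Fin n) :=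
  SimpleGraph.fromRel (fun i j =>
    (i.val = 0 ∧ 1 ≤ j.val ∧ j.val ≤ n - 2) ∨ (i.val = 1 ∧ j.val = n - 1))

/-- The caterpillar `T((n-3)/2, 0, (n-3)/2)`: a path `0 - 1 - 2` with `(n-3)/2`
pendant leaves attached at `0` and `(n-3)/2` pendant leaves attached at `2`. -/
def doubleBroom (n : ℕ) : SimpleGraph (Fin n) :=
  SimpleGraph.fromRel (fun i j =>
    (i.val = 0 ∧ j.val = 1) ∨ (i.val = 1 ∧ j.val = 2) ∨
    (i.val = 0 ∧ 3 ≤ j.val ∧ j.val < 3 + (n - 3) / 2) ∨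
    (i.val = 2 ∧ 3 + (n - 3) / 2 ≤ j.val))

/-- `(G1,a) ∘ (G2,b)`: the disjoint union of `G1` and `G2` together with the edge `ab`. -/
def connectRoots {V1 V2 : Type*} (G1 : SimpleGraph V1) (G2 : SimpleGraph V2) (a : V1) (b : V2) :
    SimpleGraph (V1 ⊕ V2) where
  Adj x y := match x, y with
    | .inl u, .inl v => G1.Adj u v
    | .inr u, .inr v => G2.Adj u v
    | .inl u, .inr v => u = a ∧ v = b
    | .inr u, .inl v => u = b ∧ v = a
  symm := by
    refine ⟨?_⟩
    rintro (u | u) (v | v) h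
    · exact G1.adj_symm h
    · exact ⟨h.2, h.1⟩
    · exact ⟨h.2, h.1⟩
    · exact G2.adj_symm h
  loopless := by
    refine ⟨?_⟩
    rintro (u | u) h
    · exact G1.irrefl h
    · exact G2.irrefl h

/-- `(G1,a) ∘ v ∘ (G2,b)`: the disjoint union of `G1` and `G2` together with a new
vertex (`none`) joined to exactly `a` and `b`. -/
def connectViaVertex {V1 V2 : Type*} (G1 : SimpleGraph V1) (G2 : SimpleGraph V2)
    (a : V1) (b : V2) : SimpleGraph (Option (V1 ⊕ V2)) where
  Adj x y := match x, y with
    | some (.inl u), some (.inl v) => G1.Adj u v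
    | some (.inr u), some (.inr v) => G2.Adj u v
    | none, some (.inl u) => u = a
    | some (.inl u), none => u = a
    | none, some (.inr u) => u = b
    | some (.inr u), none => u = b
    | _, _ => False
  symm := by
    refine ⟨?_⟩
    rintro (_ | (u | u)) (_ | (v | v)) h
    all_goals first
      | exact h.elim
      | exact h
      | exact G1.adj_symm h
      | exact G2.adj_symm h
  loopless := by
    refine ⟨?_⟩
    rintro (_ | (u | u)) h
    · exact h.elim
    · exact G1.irrefl h
    · exact G2.irrefl h

open Finset Matrix SimpleGraph
variable {N : ℕ}



lemma my_countP_two (L : List ℝ) (h : L.Pairwise (· ≤ ·)) (i : ℕ) (hi : i + 1 < L.length)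
    (c : ℝ) (hc : c < L[i]) : 2 ≤ L.countP (fun x => decide (c < x)) := by
  have hsub : (L.drop i).Sublist L := List.drop_sublist i L
  have hlen : 2 ≤ (L.drop i).length := by rw [List.length_drop]; omega
  have hsorted : (L.drop i).Pairwise (· ≤ ·) := h.sublist hsub
  refine le_trans ?_ (hsub.countP_le)
  rcases hd : L.drop i with _ | ⟨a, rest⟩
  · rw [hd] at hlen; simp at hlen
  rcases rest with _ | ⟨b, rest2⟩
  · rw [hd] at hlen; simp at hlen
  have ha : a = L[i] := by
    have h1 : (L.drop i)[0]'(by omega) = L[i + 0] := List.getElem_drop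
    have h2 := List.getElem_of_eq hd (i := 0) (by omega)
    rw [h1] at h2; simpa using h2.symm
  rw [hd] at hsorted
  have hab : a ≤ b := (List.pairwise_cons.1 hsorted).1 b (by simp)
  have hca : c < a := ha ▸ hc
  have d1 : decide (c < a) = true := decide_eq_true hca
  have d2 : decide (c < b) = true := decide_eq_true (by linarith)
  simp [List.countP_cons, d1, d2]

lemma my_getD_ge (L : List ℝ) (h : L.Pairwise (· ≤ ·)) (h2 : 2 ≤ L.length) (a : ℝ)
    (hcount : 2 ≤ L.countP (fun x => decide (a ≤ x))) : a ≤ L.getD (L.length - 2) 0 := by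
  by_contra hlt
  push_neg at hlt
  rw [List.getD_eq_getElem L 0 (by omega)] at hlt
  have hsplit := List.take_append_drop (L.length - 1) L
  have hc : L.countP (fun x => decide (a ≤ x)) =
      (L.take (L.length - 1)).countP (fun x => decide (a ≤ x)) +
      (L.drop (L.length - 1)).countP (fun x => decide (a ≤ x)) := by
    conv_lhs => rw [← hsplit]
    exact List.countP_append
  have h1 : (L.take (L.length - 1)).countP (fun x => decide (a ≤ x)) = 0 := by
    rw [List.countP_eq_zero]
    intro x hx
    rw [List.mem_take_iff_getElem] at hx
    obtain ⟨j, hj, hxj⟩ := hx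
    have hj2 : j < L.length := by omega
    have hxle : x ≤ L[L.length - 2] := by
      rcases eq_or_lt_of_le (show j ≤ L.length - 2 by omega) with he | hlt2
      · subst hxj; subst he; exact le_refl _
      · subst hxj
        exact h.rel_get_of_lt (a := ⟨j, hj2⟩) (b := ⟨L.length - 2, by omega⟩) hlt2
    simp only [decide_eq_true_eq]
    push_neg
    linarith
  have h2' : (L.drop (L.length - 1)).countP (fun x => decide (a ≤ x)) ≤ 1 := by
    calc _ ≤ (L.drop (L.length - 1)).length := List.countP_le_length
    _ = 1 := by rw [List.length_drop]; omega
  omega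

lemma my_adjH (G : SimpleGraph (Fin N)) : (G.adjMatrix ℝ).IsHermitian := by
  rw [Matrix.IsHermitian]
  ext i j
  simp [Matrix.conjTranspose_apply, G.adj_comm j i]

lemma my_eigList_eq (G : SimpleGraph (Fin N)) :
    eigList G = (Finset.univ.val.map (my_adjH G).eigenvalues).sort (· ≤ ·) := rfl

lemma my_eigList_length (G : SimpleGraph (Fin N)) : (eigList G).length = N := by
  rw [my_eigList_eq, Multiset.length_sort, Multiset.card_map]
  simpa using (Fintype.card_fin N)

lemma my_lam_two (G : SimpleGraph (Fin N)) : lam G 2 = (eigList G).getD (N - 2) 0 := by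
  rw [lam, Fintype.card_fin]

lemma my_countP_filter (G : SimpleGraph (Fin N)) (p : ℝ → Prop) :
    (eigList G).countP (fun x => decide (p x)) =
      (Finset.univ.filter (fun i => p ((my_adjH G).eigenvalues i))).card := by
  have h1 : ((eigList G : List ℝ) : Multiset ℝ) = Finset.univ.val.map (my_adjH G).eigenvalues := by
    rw [my_eigList_eq]; exact Multiset.sort_eq _ _
  have h2 := Multiset.coe_countP p (eigList G)
  rw [h1] at h2
  rw [← h2, Multiset.countP_map]
  rfl

lemma my_exists_two (G : SimpleGraph (Fin N)) (hN : 2 ≤ N) (c : ℝ) (hc : c < lam G 2) :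
    ∃ i j : Fin N, i ≠ j ∧ c < (my_adjH G).eigenvalues i ∧ c < (my_adjH G).eigenvalues j := by
  have hlen := my_eigList_length G
  have hsorted : (eigList G).Pairwise (· ≤ ·) := by
    rw [my_eigList_eq]; exact Multiset.pairwise_sort _ _
  have hgd : lam G 2 = (eigList G)[N - 2]'(by omega) := by
    rw [my_lam_two, List.getD_eq_getElem _ _ (by omega)]
  have hcount : 2 ≤ (eigList G).countP (fun x => decide (c < x)) := by
    apply my_countP_two _ hsorted (N - 2) (by omega)
    rw [← hgd]; exact hc
  rw [my_countP_filter] at hcount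
  have hcard : 1 < (Finset.univ.filter (fun i => c < (my_adjH G).eigenvalues i)).card := by omega
  obtain ⟨i, hi, j, hj, hij⟩ := Finset.one_lt_card.1 hcard
  exact ⟨i, j, hij, (Finset.mem_filter.1 hi).2, (Finset.mem_filter.1 hj).2⟩

lemma my_lam_two_ge (G : SimpleGraph (Fin N)) (hN : 2 ≤ N) (a : ℝ) (i j : Fin N) (hij : i ≠ j)
    (ha : a ≤ (my_adjH G).eigenvalues i) (hb : a ≤ (my_adjH G).eigenvalues j) : a ≤ lam G 2 := by
  have hlen := my_eigList_length G
  have hsorted : (eigList G).Pairwise (· ≤ ·) := by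
    rw [my_eigList_eq]; exact Multiset.pairwise_sort _ _
  rw [my_lam_two, show N - 2 = (eigList G).length - 2 by omega]
  apply my_getD_ge _ hsorted (by omega)
  rw [my_countP_filter]
  have hsub : ({i, j} : Finset (Fin N)) ⊆ Finset.univ.filter
      (fun t => a ≤ (my_adjH G).eigenvalues t) := by
    intro t ht
    rcases Finset.mem_insert.1 ht with rfl | ht
    · exact Finset.mem_filter.2 ⟨Finset.mem_univ _, ha⟩
    · rw [Finset.mem_singleton] at ht; subst ht
      exact Finset.mem_filter.2 ⟨Finset.mem_univ _, hb⟩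
  calc 2 = ({i, j} : Finset (Fin N)).card := by rw [Finset.card_insert_of_notMem (by simpa using hij), Finset.card_singleton]
  _ ≤ _ := Finset.card_le_card hsub

lemma my_dot_inner (x y : EuclideanSpace ℝ (Fin N)) :
    dotProduct (x : Fin N → ℝ) (y : Fin N → ℝ) = (inner ℝ x y : ℝ) := by
  rw [PiLp.inner_apply]
  simp [dotProduct, RCLike.inner_apply, starRingEnd_apply, mul_comm]

lemma my_dot_basis (G : SimpleGraph (Fin N)) (i j : Fin N) :
    dotProduct (⇑((my_adjH G).eigenvectorBasis i) : Fin N → ℝ)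
      (⇑((my_adjH G).eigenvectorBasis j)) = if i = j then 1 else 0 := by
  have horth := (my_adjH G).eigenvectorBasis.orthonormal
  rw [orthonormal_iff_ite] at horth
  exact (my_dot_inner _ _).trans (horth i j)

lemma my_core (G : SimpleGraph (Fin N)) (hN : 2 ≤ N) (c : ℝ) (v : Fin N)
    (hb : ∀ x : Fin N → ℝ, x v = 0 →
      dotProduct x ((G.adjMatrix ℝ) *ᵥ x) ≤ c * dotProduct x x) :
    lam G 2 ≤ c := by
  by_contra hcon
  push_neg at hcon
  obtain ⟨i, j, hij, hci, hcj⟩ := my_exists_two G hN c hcon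
  set hA := my_adjH G
  set eig := hA.eigenvalues with heig
  set u : Fin N → ℝ := ⇑(hA.eigenvectorBasis i) with hu
  set w : Fin N → ℝ := ⇑(hA.eigenvectorBasis j) with hw
  have huu : dotProduct u u = 1 := (my_dot_basis G i i).trans (if_pos rfl)
  have hww : dotProduct w w = 1 := (my_dot_basis G j j).trans (if_pos rfl)
  have huw : dotProduct u w = 0 := (my_dot_basis G i j).trans (if_neg hij)
  have hwu : dotProduct w u = 0 := (my_dot_basis G j i).trans (if_neg (Ne.symm hij))
  obtain ⟨α, β, hne, hv⟩ : ∃ α β : ℝ, ¬(α = 0 ∧ β = 0) ∧ α * u v - β * w v = 0 := by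
    by_cases h0 : u v = 0
    · exact ⟨1, 0, by simp, by simp [h0]⟩
    · exact ⟨w v, u v, fun h => h0 h.2, by ring⟩
  set x : Fin N → ℝ := α • u - β • w with hx
  have hxv : x v = 0 := by simpa [hx] using hv
  have hAu : (G.adjMatrix ℝ) *ᵥ u = eig i • u := hA.mulVec_eigenvectorBasis i
  have hAw : (G.adjMatrix ℝ) *ᵥ w = eig j • w := hA.mulVec_eigenvectorBasis j
  have hAx : (G.adjMatrix ℝ) *ᵥ x = (α * eig i) • u - (β * eig j) • w := by
    rw [hx, Matrix.mulVec_sub, Matrix.mulVec_smul, Matrix.mulVec_smul, hAu, hAw,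
      smul_smul, smul_smul]
  have hdot : dotProduct x ((G.adjMatrix ℝ) *ᵥ x) = α^2 * eig i + β^2 * eig j := by
    rw [hAx, hx]
    rw [sub_dotProduct, smul_dotProduct, smul_dotProduct,
      dotProduct_sub, dotProduct_sub, dotProduct_smul,
      dotProduct_smul, dotProduct_smul, dotProduct_smul,
      huu, hww, huw, hwu]
    simp only [smul_eq_mul]
    ring
  have hxx : dotProduct x x = α^2 + β^2 := by
    rw [hx]
    rw [sub_dotProduct, smul_dotProduct, smul_dotProduct,
      dotProduct_sub, dotProduct_sub, dotProduct_smul,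
      dotProduct_smul, dotProduct_smul, dotProduct_smul,
      huu, hww, huw, hwu]
    simp only [smul_eq_mul]
    ring
  have hineq := hb x hxv
  rw [hdot, hxx] at hineq
  have h1 : α^2 * c ≤ α^2 * eig i := mul_le_mul_of_nonneg_left (le_of_lt hci) (sq_nonneg α)
  have h2 : β^2 * c ≤ β^2 * eig j := mul_le_mul_of_nonneg_left (le_of_lt hcj) (sq_nonneg β)
  rcases not_and_or.1 hne with h0 | h0
  · have hp : 0 < α^2 := by positivity
    have := mul_lt_mul_of_pos_left hci hp
    nlinarith
  · have hp : 0 < β^2 := by positivity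
    have := mul_lt_mul_of_pos_left hcj hp
    nlinarith


lemma my_entry_bound (M : Matrix (Fin N) (Fin N) ℝ) (hpos : ∀ i j, 0 ≤ M i j)
    (hsym : Mᵀ = M) (r : ℝ) (hrow : ∀ i, ∑ j, M i j ≤ r) (x : Fin N → ℝ) :
    x ⬝ᵥ (M *ᵥ x) ≤ r * (x ⬝ᵥ x) := by
  have hsym' : ∀ i j, M i j = M j i := by
    intro i j
    have h := congrFun (congrFun hsym i) j
    rw [Matrix.transpose_apply] at h
    exact h.symm
  have hexp : x ⬝ᵥ (M *ᵥ x) = ∑ i, ∑ j, M i j * x i * x j := by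
    simp only [dotProduct, mulVec, Finset.mul_sum]
    exact Finset.sum_congr rfl fun i _ => Finset.sum_congr rfl fun j _ => by ring
  have key : (∑ i, ∑ j, M i j * x i * x j) * 2 ≤
      (∑ i, ∑ j, M i j * x i ^ 2) + (∑ i, ∑ j, M i j * x j ^ 2) := by
    rw [Finset.sum_mul, ← Finset.sum_add_distrib]
    apply Finset.sum_le_sum; intro i _
    rw [Finset.sum_mul, ← Finset.sum_add_distrib]
    apply Finset.sum_le_sum; intro j _
    nlinarith [mul_nonneg (hpos i j) (sq_nonneg (x i - x j))]
  have h1 : ∑ i, ∑ j, M i j * x i ^ 2 ≤ r * (x ⬝ᵥ x) := by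
    have : ∑ i, ∑ j, M i j * x i ^ 2 = ∑ i, x i ^ 2 * ∑ j, M i j :=
      Finset.sum_congr rfl fun i _ => by rw [Finset.mul_sum]; exact Finset.sum_congr rfl fun j _ => mul_comm _ _
    rw [this]
    calc ∑ i, x i ^ 2 * ∑ j, M i j ≤ ∑ i, x i ^ 2 * r :=
      Finset.sum_le_sum fun i _ => mul_le_mul_of_nonneg_left (hrow i) (sq_nonneg _)
    _ = r * (x ⬝ᵥ x) := by
      rw [dotProduct, Finset.mul_sum]
      exact Finset.sum_congr rfl fun i _ => by rw [sq]; ring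
  have h2 : ∑ i, ∑ j, M i j * x j ^ 2 ≤ r * (x ⬝ᵥ x) := by
    rw [Finset.sum_comm]
    have : ∑ j, ∑ i, M i j * x j ^ 2 = ∑ j, ∑ i, M j i * x j ^ 2 :=
      Finset.sum_congr rfl fun j _ => Finset.sum_congr rfl fun i _ => by rw [hsym' i j]
    rw [this]
    have : ∑ j, ∑ i, M j i * x j ^ 2 ≤ r * (x ⬝ᵥ x) := by
      have e : ∑ j, ∑ i, M j i * x j ^ 2 = ∑ j, x j ^ 2 * ∑ i, M j i :=
        Finset.sum_congr rfl fun j _ => by rw [Finset.mul_sum]; exact Finset.sum_congr rfl fun i _ => mul_comm _ _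
      rw [e]
      calc ∑ j, x j ^ 2 * ∑ i, M j i ≤ ∑ j, x j ^ 2 * r :=
        Finset.sum_le_sum fun j _ => mul_le_mul_of_nonneg_left (hrow j) (sq_nonneg _)
      _ = r * (x ⬝ᵥ x) := by
        rw [dotProduct, Finset.mul_sum]
        exact Finset.sum_congr rfl fun i _ => by rw [sq]; ring
    exact this
  rw [hexp]
  linarith

lemma my_dot_nonneg (x : Fin N → ℝ) : 0 ≤ x ⬝ᵥ x :=
  Finset.sum_nonneg fun i _ => mul_self_nonneg (x i)

lemma my_qf_sqrt (Bm : Matrix (Fin N) (Fin N) ℝ) (hsym : Bmᵀ = Bm) (r : ℝ) (hr : 0 ≤ r)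
    (hB2 : ∀ x : Fin N → ℝ, x ⬝ᵥ ((Bm * Bm) *ᵥ x) ≤ r * (x ⬝ᵥ x)) (x : Fin N → ℝ) :
    x ⬝ᵥ (Bm *ᵥ x) ≤ Real.sqrt r * (x ⬝ᵥ x) := by
  set y := Bm *ᵥ x with hy
  have hyy : x ⬝ᵥ ((Bm * Bm) *ᵥ x) = y ⬝ᵥ y := by
    rw [← Matrix.mulVec_mulVec, dotProduct_mulVec]
    congr 1
    rw [← Matrix.mulVec_transpose, hsym]
  have hcauchy : (x ⬝ᵥ y) ^ 2 ≤ (x ⬝ᵥ x) * (y ⬝ᵥ y) := by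
    have := Finset.sum_mul_sq_le_sq_mul_sq Finset.univ x y
    simpa [dotProduct, sq] using this
  have hxx := my_dot_nonneg (N := N) x
  have h1 : (x ⬝ᵥ y) ^ 2 ≤ r * (x ⬝ᵥ x) ^ 2 := by
    have := mul_le_mul_of_nonneg_left (le_trans (le_of_eq hyy.symm) (hB2 x)) hxx
    calc (x ⬝ᵥ y) ^ 2 ≤ (x ⬝ᵥ x) * (y ⬝ᵥ y) := hcauchy
    _ ≤ (x ⬝ᵥ x) * (r * (x ⬝ᵥ x)) := this
    _ = r * (x ⬝ᵥ x) ^ 2 := by ring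
  calc x ⬝ᵥ y ≤ |x ⬝ᵥ y| := le_abs_self _
  _ = Real.sqrt ((x ⬝ᵥ y) ^ 2) := (Real.sqrt_sq_eq_abs _).symm
  _ ≤ Real.sqrt (r * (x ⬝ᵥ x) ^ 2) := Real.sqrt_le_sqrt h1
  _ = Real.sqrt r * (x ⬝ᵥ x) := by
    rw [Real.sqrt_mul hr, Real.sqrt_sq hxx]


def myGdel (G : SimpleGraph (Fin N)) (v : Fin N) : SimpleGraph (Fin N) where
  Adj a b := G.Adj a b ∧ a ≠ v ∧ b ≠ v
  symm := ⟨fun a b h => ⟨h.1.symm, h.2.2, h.2.1⟩⟩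
  loopless := ⟨fun a h => G.irrefl h.1⟩

lemma myGdel_adj {G : SimpleGraph (Fin N)} {v a b : Fin N} :
    (myGdel G v).Adj a b ↔ G.Adj a b ∧ a ≠ v ∧ b ≠ v := Iff.rfl

lemma my_walk_ne {G : SimpleGraph (Fin N)} {v : Fin N} :
    ∀ {a b : Fin N}, ((myGdel G v).Walk a b) → a ≠ v → b ≠ v := by
  intro a b w
  induction w with
  | nil => exact id
  | cons h p ih => intro _; exact ih h.2.2

lemma my_walk_support_ne {G : SimpleGraph (Fin N)} {v : Fin N} :
    ∀ {a b : Fin N}, (w : (myGdel G v).Walk a b) → a ≠ v → v ∉ w.support := by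
  intro a b w
  induction w with
  | nil => intro ha; simp [Ne.symm ha]
  | cons h p ih =>
    intro ha
    rw [SimpleGraph.Walk.support_cons]
    intro hmem
    rcases List.mem_cons.1 hmem with hh | hh
    · exact ha hh.symm
    · exact ih h.2.2 hh

/-- transfer a walk in `myGdel G v` to `G`, keeping the same support -/
lemma my_walk_up {G : SimpleGraph (Fin N)} {v a b : Fin N} (w : (myGdel G v).Walk a b) :
    ∃ p : G.Walk a b, p.support = w.support := by
  have he : ∀ e ∈ w.edges, e ∈ G.edgeSet := by
    intro e he
    have h1 := w.edges_subset_edgeSet he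
    induction e with
    | h x y => exact (SimpleGraph.mem_edgeSet _).2 ((SimpleGraph.mem_edgeSet _).1 h1).1
  exact ⟨w.transfer G he, SimpleGraph.Walk.support_transfer _ _⟩

/-- transfer a walk in `G` avoiding `v` to `myGdel G v` -/
lemma my_walk_down {G : SimpleGraph (Fin N)} {v a b : Fin N} (w : G.Walk a b)
    (hv : v ∉ w.support) : ∃ p : (myGdel G v).Walk a b, p.support = w.support := by
  have he : ∀ e ∈ w.edges, e ∈ (myGdel G v).edgeSet := by
    intro e he
    induction e with
    | h x y =>
      rw [SimpleGraph.mem_edgeSet]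
      refine ⟨w.adj_of_mem_edges he, ?_, ?_⟩
      · intro hx; subst hx; exact hv (w.fst_mem_support_of_mem_edges he)
      · intro hy; subst hy; exact hv (w.snd_mem_support_of_mem_edges he)
  exact ⟨w.transfer _ he, SimpleGraph.Walk.support_transfer _ _⟩

def myComp (G : SimpleGraph (Fin N)) (v u : Fin N) : Finset (Fin N) :=
  Finset.univ.filter (fun w => (myGdel G v).Reachable u w)

lemma myComp_mem {G : SimpleGraph (Fin N)} {v u w : Fin N} :
    w ∈ myComp G v u ↔ (myGdel G v).Reachable u w := by
  simp [myComp]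

lemma myComp_self {G : SimpleGraph (Fin N)} (v u : Fin N) : u ∈ myComp G v u :=
  myComp_mem.2 (SimpleGraph.Reachable.refl u)

lemma myComp_eq {G : SimpleGraph (Fin N)} {v u u' : Fin N}
    (h : (myGdel G v).Reachable u u') : myComp G v u = myComp G v u' := by
  ext w
  rw [myComp_mem, myComp_mem]
  exact ⟨fun hw => h.symm.trans hw, fun hw => h.trans hw⟩

lemma my_key {G : SimpleGraph (Fin N)} (hT : G.IsTree) {v b : Fin N} (hadj : G.Adj v b) :
    ∀ w, w ∈ myComp G v b ↔ w ∉ myComp G b v := by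
  intro w
  have hvb : v ≠ b := hadj.ne
  by_cases hwv : w = v
  · rw [hwv]
    constructor
    · intro hmem
      exact absurd rfl (my_walk_ne (myComp_mem.1 hmem).some (Ne.symm hvb))
    · intro hmem
      exact absurd (myComp_self b v) hmem
  · by_cases hwb : w = b
    · rw [hwb]
      constructor
      · intro _
        intro hmem
        exact absurd rfl (my_walk_ne (myComp_mem.1 hmem).some hvb)
      · intro _; exact myComp_self v b
    · constructor
      · -- w ∈ comp_{G-v}(b) → w ∉ comp_{G-b}(v)
        intro hmem hmem2
        obtain ⟨w1⟩ := myComp_mem.1 hmem   -- walk b → w in G - v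
        obtain ⟨w2⟩ := myComp_mem.1 hmem2  -- walk v → w in G - b
        -- build path P1 : v → w through b
        obtain ⟨p1, hp1s⟩ := my_walk_up w1
        have hv1 : v ∉ p1.support := by
          rw [hp1s]; exact my_walk_support_ne w1 (Ne.symm hvb)
        set q1 := p1.toPath with hq1
        have hv1' : v ∉ (q1 : G.Walk b w).support :=
          fun hmem => hv1 (SimpleGraph.Walk.support_toPath_subset p1 hmem)
        have hP1 : (SimpleGraph.Walk.cons hadj (q1 : G.Walk b w)).IsPath :=
          (SimpleGraph.Walk.cons_isPath_iff _ _).2 ⟨q1.2, hv1'⟩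
        -- build path P2 : v → w avoiding b
        obtain ⟨p2, hp2s⟩ := my_walk_up w2
        have hb2 : b ∉ p2.support := by
          rw [hp2s]; exact my_walk_support_ne w2 hvb
        set q2 := p2.toPath with hq2
        have hb2' : b ∉ (q2 : G.Walk v w).support :=
          fun hmem => hb2 (SimpleGraph.Walk.support_toPath_subset p2 hmem)
        obtain ⟨p0, _, hun⟩ := hT.existsUnique_path v w
        have he1 := hun _ hP1
        have he2 := hun _ q2.2
        rw [← he2] at he1
        apply hb2'
        rw [← he1, SimpleGraph.Walk.support_cons]
        exact List.mem_cons_of_mem _ ((q1 : G.Walk b w).start_mem_support)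
      · -- w ∉ comp_{G-b}(v) → w ∈ comp_{G-v}(b)
        intro hmem
        have hreach : G.Reachable w v := (hT.isConnected.preconnected w v)
        obtain ⟨p, hp, _⟩ := hT.existsUnique_path w v
        by_cases hbp : b ∈ p.support
        · set q := p.takeUntil b hbp with hqdef
          have hq : q.IsPath := hp.takeUntil hbp
          have hvq : v ∉ q.support := by
            intro hvq
            have hspec := p.take_spec hbp
            have hnodup := hp.support_nodup
            rw [← hspec, SimpleGraph.Walk.support_append] at hnodup
            have hdisj := List.disjoint_of_nodup_append hnodup
            have hvd : v ∈ (p.dropUntil b hbp).support := (p.dropUntil b hbp).end_mem_support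
            rw [SimpleGraph.Walk.support_eq_cons] at hvd
            rcases List.mem_cons.1 hvd with hh | hh
            · exact hvb hh
            · exact hdisj hvq hh
          obtain ⟨q', _⟩ := my_walk_down q hvq
          exact myComp_mem.2 (SimpleGraph.Reachable.symm ⟨q'⟩)
        · obtain ⟨p', _⟩ := my_walk_down p hbp
          exact absurd (myComp_mem.2 (SimpleGraph.Reachable.symm ⟨p'⟩)) hmem

lemma my_comp_nbr {G : SimpleGraph (Fin N)} (hT : G.IsTree) {v u : Fin N} (huv : u ≠ v) :
    ∃ b, G.Adj v b ∧ myComp G v u = myComp G v b := by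
  obtain ⟨p, hp, -⟩ := hT.existsUnique_path v u
  cases p with
  | nil => exact absurd rfl (Ne.symm huv)
  | @cons _ x _ h q =>
    have hvq : v ∉ q.support := ((SimpleGraph.Walk.cons_isPath_iff h q).1 hp).2
    obtain ⟨q', _⟩ := my_walk_down q hvq
    exact ⟨x, h, myComp_eq (SimpleGraph.Reachable.symm ⟨q'⟩)⟩

lemma my_comp_card {G : SimpleGraph (Fin N)} (hT : G.IsTree) {v b : Fin N} (hadj : G.Adj v b) :
    (myComp G v b).card + (myComp G b v).card = N := by
  have hcompl : myComp G v b = (myComp G b v)ᶜ := by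
    ext w
    rw [Finset.mem_compl]
    exact my_key hT hadj w
  rw [hcompl, Finset.card_compl, Fintype.card_fin]
  have := Finset.card_le_univ (myComp G b v)
  rw [Fintype.card_fin] at this
  omega

lemma my_centroid {G : SimpleGraph (Fin N)} (hT : G.IsTree) (hN : 1 ≤ N) :
    ∃ v : Fin N, ∀ u, u ≠ v → 2 * (myComp G v u).card ≤ N := by
  by_contra hcon
  push_neg at hcon
  have hbad : ∀ v : Fin N, ∃ b, G.Adj v b ∧ N + 1 ≤ 2 * (myComp G v b).card := by
    intro v
    obtain ⟨u, huv, hcard⟩ := hcon v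
    obtain ⟨b, hb, he⟩ := my_comp_nbr hT huv
    exact ⟨b, hb, by rw [← he]; omega⟩
  set S : Finset (Fin N × Fin N) :=
    Finset.univ.filter (fun p => G.Adj p.1 p.2 ∧ N + 1 ≤ 2 * (myComp G p.1 p.2).card) with hS
  have hSne : S.Nonempty := by
    obtain ⟨b, hb, hc⟩ := hbad ⟨0, by omega⟩
    exact ⟨(⟨0, by omega⟩, b), by simp [hS, hb]; omega⟩
  obtain ⟨⟨v, b⟩, hmem, hmin⟩ := S.exists_min_image (fun p => (myComp G p.1 p.2).card) hSne
  rw [hS, Finset.mem_filter] at hmem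
  obtain ⟨-, hadj, hcard⟩ := hmem
  dsimp only at hadj hcard
  obtain ⟨b', hb', hcard'⟩ := hbad b
  by_cases hv : v ∈ myComp G b b'
  · have he : myComp G b b' = myComp G b v := myComp_eq (Iff.mp myComp_mem hv)
    have hsum := my_comp_card hT hadj
    rw [he] at hcard'
    omega
  · have hsub : myComp G b b' ⊆ (myComp G v b).erase b := by
      intro w hw
      have hr : (myGdel G b).Reachable b' w := myComp_mem.1 hw
      rw [Finset.mem_erase]
      constructor
      · exact my_walk_ne hr.some hb'.ne'
      · rw [my_key hT hadj w]
        intro hw2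
        exact hv (myComp_mem.2 (hr.trans (myComp_mem.1 hw2).symm))
    have hle := Finset.card_le_card hsub
    rw [Finset.card_erase_of_mem (myComp_self v b)] at hle
    have hminle := hmin (b, b') (by simp [hS, hb']; omega)
    have hpos : 1 ≤ (myComp G v b).card := Finset.card_pos.2 ⟨b, myComp_self v b⟩
    dsimp only at hminle
    omega

lemma my_tree_htri {G : SimpleGraph (Fin N)} (hT : G.IsTree) :
    ∀ a c t : Fin N, G.Adj a t → G.Adj t c → a ≠ c → ¬ G.Adj a c := by
  intro a c t hat htc hac hadj
  have hP1 : (SimpleGraph.Walk.cons hadj SimpleGraph.Walk.nil).IsPath := by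
    simp [SimpleGraph.Walk.cons_isPath_iff, hac]
  have hP2 : (SimpleGraph.Walk.cons hat
      (SimpleGraph.Walk.cons htc SimpleGraph.Walk.nil)).IsPath := by
    simp [SimpleGraph.Walk.cons_isPath_iff, hat.ne, htc.ne, hac]
  obtain ⟨p0, -, hun⟩ := hT.existsUnique_path a c
  have he := (hun _ hP1).trans (hun _ hP2).symm
  have := congrArg SimpleGraph.Walk.length he
  simp at this

lemma my_tree_hcom {G : SimpleGraph (Fin N)} (hT : G.IsTree) :
    ∀ a c t t' : Fin N, G.Adj a t → G.Adj t c → G.Adj a t' → G.Adj t' c → a ≠ c → t = t' := by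
  intro a c t t' hat htc hat' ht'c hac
  have hP1 : (SimpleGraph.Walk.cons hat
      (SimpleGraph.Walk.cons htc SimpleGraph.Walk.nil)).IsPath := by
    simp [SimpleGraph.Walk.cons_isPath_iff, hat.ne, htc.ne, hac]
  have hP2 : (SimpleGraph.Walk.cons hat'
      (SimpleGraph.Walk.cons ht'c SimpleGraph.Walk.nil)).IsPath := by
    simp [SimpleGraph.Walk.cons_isPath_iff, hat'.ne, ht'c.ne, hac]
  obtain ⟨p0, -, hun⟩ := hT.existsUnique_path a c
  have he := (hun _ hP1).trans (hun _ hP2).symm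
  have := congrArg SimpleGraph.Walk.support he
  simpa using this

lemma my_rowsum {G : SimpleGraph (Fin N)} {v : Fin N}
    (hcom : ∀ a c t t' : Fin N, G.Adj a t → G.Adj t c → G.Adj a t' → G.Adj t' c → a ≠ c → t = t')
    (htri : ∀ a c t : Fin N, G.Adj a t → G.Adj t c → a ≠ c → ¬ G.Adj a c)
    (k : ℕ) (hgood : ∀ u, u ≠ v → (myComp G v u).card ≤ k + 1) (u : Fin N) :
    ∑ j, (((myGdel G v).adjMatrix ℝ) * ((myGdel G v).adjMatrix ℝ)) u j ≤ (k : ℝ) := by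
  classical
  set B := (myGdel G v).adjMatrix ℝ with hB
  have hexp : ∑ j, (B * B) u j =
      ((Finset.univ.filter (fun p : Fin N × Fin N =>
        (myGdel G v).Adj u p.1 ∧ (myGdel G v).Adj p.1 p.2)).card : ℝ) := by
    have h1 : ∀ j, (B * B) u j = ∑ t, if (myGdel G v).Adj u t ∧ (myGdel G v).Adj t j then (1:ℝ) else 0 := by
      intro j
      rw [Matrix.mul_apply]
      refine Finset.sum_congr rfl fun t _ => ?_
      rw [hB, SimpleGraph.adjMatrix_apply, SimpleGraph.adjMatrix_apply, ite_and]
      split_ifs <;> ring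
    calc ∑ j, (B * B) u j
        = ∑ j, ∑ t, if (myGdel G v).Adj u t ∧ (myGdel G v).Adj t j then (1:ℝ) else 0 :=
          Finset.sum_congr rfl fun j _ => h1 j
      _ = ∑ t, ∑ j, if (myGdel G v).Adj u t ∧ (myGdel G v).Adj t j then (1:ℝ) else 0 :=
          Finset.sum_comm
      _ = ∑ p ∈ Finset.univ ×ˢ Finset.univ, if (myGdel G v).Adj u p.1 ∧ (myGdel G v).Adj p.1 p.2 then (1:ℝ) else 0 :=
          (Finset.sum_product' _ _ _).symm
      _ = _ := by
          rw [Finset.univ_product_univ, Finset.sum_boole]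
  rw [hexp]
  by_cases huv : u = v
  · have : (Finset.univ.filter (fun p : Fin N × Fin N =>
        (myGdel G v).Adj u p.1 ∧ (myGdel G v).Adj p.1 p.2)) = ∅ := by
      apply Finset.filter_false_of_mem
      intro p _ hp
      exact hp.1.2.1 huv
    rw [this]
    simp
  · -- injection into (myComp G v u).erase u
    have hinj : (Finset.univ.filter (fun p : Fin N × Fin N =>
        (myGdel G v).Adj u p.1 ∧ (myGdel G v).Adj p.1 p.2)).card ≤
        ((myComp G v u).erase u).card := by
      apply Finset.card_le_card_of_injOn (fun p => if p.2 = u then p.1 else p.2)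
      · intro p hp
        rw [Finset.mem_coe, Finset.mem_filter] at hp
        obtain ⟨-, h1, h2⟩ := hp
        rw [Finset.mem_coe, Finset.mem_erase]
        dsimp only
        by_cases h2u : p.2 = u
        · rw [if_pos h2u]
          exact ⟨h1.1.ne', myComp_mem.2 ⟨SimpleGraph.Walk.cons h1 SimpleGraph.Walk.nil⟩⟩
        · rw [if_neg h2u]
          exact ⟨h2u, myComp_mem.2 ⟨SimpleGraph.Walk.cons h1 (SimpleGraph.Walk.cons h2 SimpleGraph.Walk.nil)⟩⟩
      · intro p hp q hq hfpq
        dsimp only at hfpq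
        rw [Finset.mem_coe, Finset.mem_filter] at hp hq
        obtain ⟨-, hp1, hp2⟩ := hp
        obtain ⟨-, hq1, hq2⟩ := hq
        have hGp1 : G.Adj u p.1 := hp1.1
        have hGp2 : G.Adj p.1 p.2 := hp2.1
        have hGq1 : G.Adj u q.1 := hq1.1
        have hGq2 : G.Adj q.1 q.2 := hq2.1
        by_cases h2u : p.2 = u <;> by_cases h2u' : q.2 = u
        · rw [if_pos h2u, if_pos h2u'] at hfpq
          exact Prod.ext hfpq (h2u.trans h2u'.symm)
        · rw [if_pos h2u, if_neg h2u'] at hfpq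
          exfalso
          have hq2p : G.Adj q.1 p.1 := by rw [hfpq]; exact hGq2
          exact htri u p.1 q.1 hGq1 hq2p hGp1.ne hGp1
        · rw [if_neg h2u, if_pos h2u'] at hfpq
          exfalso
          have hup2 : G.Adj u p.2 := by rw [hfpq]; exact hGq1
          exact htri u p.2 p.1 hGp1 hGp2 (Ne.symm h2u) hup2
        · rw [if_neg h2u, if_neg h2u'] at hfpq
          have hq2' : G.Adj q.1 p.2 := by rw [hfpq]; exact hGq2
          have ht : p.1 = q.1 :=
            hcom u p.2 p.1 q.1 hGp1 hGp2 hGq1 hq2' (Ne.symm h2u)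
          exact Prod.ext ht hfpq
    have hcard := hgood u huv
    have herase : ((myComp G v u).erase u).card = (myComp G v u).card - 1 :=
      Finset.card_erase_of_mem (myComp_self v u)
    have h1 : (Finset.univ.filter (fun p : Fin N × Fin N =>
        (myGdel G v).Adj u p.1 ∧ (myGdel G v).Adj p.1 p.2)).card ≤ k := by omega
    exact_mod_cast h1


lemma my_dot_eq (G : SimpleGraph (Fin N)) (v : Fin N) (x : Fin N → ℝ) (hxv : x v = 0) :
    x ⬝ᵥ ((G.adjMatrix ℝ) *ᵥ x) = x ⬝ᵥ (((myGdel G v).adjMatrix ℝ) *ᵥ x) := by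
  simp only [dotProduct, mulVec]
  apply Finset.sum_congr rfl
  intro i _
  by_cases hiv : i = v
  · subst hiv; rw [hxv]; ring
  · congr 1
    apply Finset.sum_congr rfl
    intro j _
    by_cases hjv : j = v
    · subst hjv; rw [hxv]; ring
    · simp [SimpleGraph.adjMatrix_apply, myGdel_adj, hiv, hjv]

lemma my_main {G : SimpleGraph (Fin N)} (k : ℕ) (hN : 2 ≤ N)
    (hcom : ∀ a c t t' : Fin N, G.Adj a t → G.Adj t c → G.Adj a t' → G.Adj t' c → a ≠ c → t = t')
    (htri : ∀ a c t : Fin N, G.Adj a t → G.Adj t c → a ≠ c → ¬ G.Adj a c)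
    (v : Fin N) (hgood : ∀ u, u ≠ v → (myComp G v u).card ≤ k + 1) :
    lam G 2 ≤ Real.sqrt k := by
  apply my_core G hN _ v
  intro x hxv
  rw [my_dot_eq G v x hxv]
  set B := (myGdel G v).adjMatrix ℝ with hB
  have hBsym : Bᵀ = B := SimpleGraph.transpose_adjMatrix _
  have hM : ∀ i j, 0 ≤ (B * B) i j := by
    intro i j
    rw [Matrix.mul_apply]
    apply Finset.sum_nonneg
    intro t _
    rw [hB]
    simp only [SimpleGraph.adjMatrix_apply]
    split_ifs <;> norm_num
  have hMsym : (B * B)ᵀ = B * B := by rw [Matrix.transpose_mul, hBsym]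
  have hrow := my_rowsum hcom htri k hgood
  have hB2 : ∀ y : Fin N → ℝ, y ⬝ᵥ ((B * B) *ᵥ y) ≤ (k : ℝ) * (y ⬝ᵥ y) :=
    fun y => my_entry_bound _ hM hMsym _ hrow y
  exact my_qf_sqrt B hBsym (k : ℝ) (Nat.cast_nonneg k) hB2 x

theorem my_tree_lam (G : SimpleGraph (Fin N)) (hT : G.IsTree) (hN : 10 ≤ N) (hodd : Odd N) :
    lam G 2 ≤ Real.sqrt (((N : ℝ) - 3) / 2) := by
  set k := (N - 3) / 2 with hk
  obtain ⟨v, hv⟩ := my_centroid hT (by omega)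
  have hgood : ∀ u, u ≠ v → (myComp G v u).card ≤ k + 1 := by
    intro u hu
    have h1 := hv u hu
    obtain ⟨m, hm⟩ := hodd
    omega
  have hmain := my_main k (by omega) (my_tree_hcom hT) (my_tree_htri hT) v hgood
  have hcast : ((N : ℝ) - 3) / 2 = (k : ℝ) := by
    obtain ⟨m, hm⟩ := hodd
    have hNk : N = 2 * k + 3 := by omega
    rw [hNk]
    push_cast
    ring
  rw [hcast]
  exact hmain

def myP (n a b : ℕ) : Prop :=
  (a = 0 ∧ b = 1) ∨ (a = 1 ∧ b = 2) ∨
    (a = 0 ∧ 3 ≤ b ∧ b < 3 + (n - 3) / 2) ∨ (a = 2 ∧ 3 + (n - 3) / 2 ≤ b)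

lemma my_dB_adj {n : ℕ} (x y : Fin n) :
    (doubleBroom n).Adj x y ↔ (myP n x.val y.val ∨ myP n y.val x.val) := by
  rw [doubleBroom, SimpleGraph.fromRel_adj]
  constructor
  · rintro ⟨-, h⟩; exact h
  · intro h
    refine ⟨?_, h⟩
    intro he
    rw [he] at h
    simp only [myP] at h
    omega

lemma my_dB_hcom {n : ℕ} :
    ∀ a c t t' : Fin n, (doubleBroom n).Adj a t → (doubleBroom n).Adj t c →
      (doubleBroom n).Adj a t' → (doubleBroom n).Adj t' c → a ≠ c → t = t' := by
  intro a c t t' h1 h2 h3 h4 hne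
  rw [my_dB_adj] at h1 h2 h3 h4
  simp only [myP] at h1 h2 h3 h4
  have hne' : a.val ≠ c.val := fun h => hne (Fin.ext h)
  apply Fin.ext
  omega

lemma my_dB_htri {n : ℕ} :
    ∀ a c t : Fin n, (doubleBroom n).Adj a t → (doubleBroom n).Adj t c →
      a ≠ c → ¬ (doubleBroom n).Adj a c := by
  intro a c t h1 h2 hne h3
  rw [my_dB_adj] at h1 h2 h3
  simp only [myP] at h1 h2 h3
  omega

lemma my_walk_closed {N : ℕ} {G : SimpleGraph (Fin N)} (S : Fin N → Prop)
    (hS : ∀ x y, G.Adj x y → S x → S y) :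
    ∀ {a b : Fin N}, G.Walk a b → S a → S b := by
  intro a b w
  induction w with
  | nil => exact id
  | cons h p ih => intro ha; exact ih (hS _ _ h ha)

lemma my_card_val {n : ℕ} (p : ℕ → Prop) :
    (Finset.univ.filter (fun w : Fin n => p w.val)).card = ((Finset.range n).filter p).card := by
  apply Finset.card_bij (fun w _ => w.val)
  · intro w hw
    rw [Finset.mem_filter] at hw ⊢
    exact ⟨Finset.mem_range.2 w.isLt, hw.2⟩
  · intro w _ w' _ h
    exact Fin.ext h
  · intro m hm
    rw [Finset.mem_filter, Finset.mem_range] at hm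
    exact ⟨⟨m, hm.1⟩, Finset.mem_filter.2 ⟨Finset.mem_univ _, hm.2⟩, rfl⟩

/-- the `1`-vertex of `Fin n` -/
def myV1 (n : ℕ) (hn : 10 ≤ n) : Fin n := ⟨1, by omega⟩

lemma my_dB_good {n : ℕ} (hn : 10 ≤ n) (hodd : Odd n) :
    ∀ u, u ≠ myV1 n hn → (myComp (doubleBroom n) (myV1 n hn) u).card ≤ (n - 3) / 2 + 1 := by
  intro u hu
  set k := (n - 3) / 2 with hk
  have hk4 : 4 ≤ k := by obtain ⟨m, hm⟩ := hodd; omega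
  have hkn : 3 + k ≤ n := by omega
  have hn23 : n = 2 * k + 3 := by obtain ⟨m, hm⟩ := hodd; omega
  have huval : u.val ≠ 1 := by
    intro h; exact hu (Fin.ext h)
  -- two closed sets
  have hclosed : ∀ (S : ℕ → Prop),
      (∀ xv yv, xv < n → yv < n → (myP n xv yv ∨ myP n yv xv) → xv ≠ 1 → yv ≠ 1 → S xv → S yv) →
      ∀ x y, (myGdel (doubleBroom n) (myV1 n hn)).Adj x y → S x.val → S y.val := by
    intro S hS x y hxy hx
    obtain ⟨hadj, hxv, hyv⟩ := hxy
    rw [my_dB_adj] at hadj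
    exact hS x.val y.val x.isLt y.isLt hadj
      (fun h => hxv (Fin.ext h)) (fun h => hyv (Fin.ext h)) hx
  have hmain : ∀ (S : ℕ → Prop) (F : Finset ℕ),
      (∀ xv yv, xv < n → yv < n → (myP n xv yv ∨ myP n yv xv) → xv ≠ 1 → yv ≠ 1 → S xv → S yv) →
      S u.val → (∀ m, m < n → S m → m ∈ F) →
      (myComp (doubleBroom n) (myV1 n hn) u).card ≤ F.card := by
    intro S F hS hu' hF
    apply Finset.card_le_card_of_injOn (fun w => w.val)
    · intro w hw
      obtain ⟨wk⟩ := myComp_mem.1 hw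
      exact hF w.val w.isLt (my_walk_closed (fun z => S z.val) (hclosed S hS) wk hu')
    · intro w _ w' _ h
      exact Fin.ext h
  by_cases hside : u.val = 0 ∨ (3 ≤ u.val ∧ u.val < 3 + k)
  · have h1 := hmain (fun m => m = 0 ∨ (3 ≤ m ∧ m < 3 + k)) (insert 0 (Finset.Ico 3 (3 + k)))
      (by intro xv yv hx hy hadj hx1 hy1 hS; simp only [myP] at hadj; omega) hside
      (by intro m hm hSm; simp only [Finset.mem_insert, Finset.mem_Ico]; omega)
    rw [Finset.card_insert_of_notMem (by simp), Nat.card_Ico] at h1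
    omega
  · have hu2 : u.val = 2 ∨ 3 + k ≤ u.val := by
      have := u.isLt; omega
    have h1 := hmain (fun m => m = 2 ∨ 3 + k ≤ m) (insert 2 (Finset.Ico (3 + k) n))
      (by intro xv yv hx hy hadj hx1 hy1 hS; simp only [myP] at hadj; omega) hu2
      (by intro m hm hSm; simp only [Finset.mem_insert, Finset.mem_Ico]; omega)
    rw [Finset.card_insert_of_notMem (by simp; omega), Nat.card_Ico] at h1
    omega

def myVec (n : ℕ) (a0 a1 a2 aL aR : ℝ) : Fin n → ℝ := fun j =>
  if j.val = 0 then a0 else if j.val = 1 then a1 else if j.val = 2 then a2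
  else if j.val < 3 + (n - 3) / 2 then aL else aR

lemma my_sum_single {n c : ℕ} (hc : c < n) (a : ℝ) :
    (∑ m ∈ Finset.range n, if m = c then a else 0) = a := by
  rw [Finset.sum_ite_eq' (Finset.range n) c (fun _ => a)]
  simp [hc]

lemma my_sum_Ico {n lo hi : ℕ} (hhi : hi ≤ n) (a : ℝ) :
    (∑ m ∈ Finset.range n, if lo ≤ m ∧ m < hi then a else 0) = ((hi - lo : ℕ) : ℝ) * a := by
  have h : ∑ m ∈ Finset.range n, (if lo ≤ m ∧ m < hi then a else 0) =
      ∑ m ∈ (Finset.range n).filter (fun m => lo ≤ m ∧ m < hi), a :=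
    (Finset.sum_filter _ _).symm
  rw [h]
  have h2 : (Finset.range n).filter (fun m => lo ≤ m ∧ m < hi) = Finset.Ico lo hi := by
    ext m
    simp only [Finset.mem_filter, Finset.mem_range, Finset.mem_Ico]
    omega
  rw [h2, Finset.sum_const, Nat.card_Ico, nsmul_eq_mul]

lemma my_dB_mulVec {n : ℕ} (hn : 10 ≤ n) (hodd : Odd n) (a0 a1 a2 aL aR : ℝ) :
    ((doubleBroom n).adjMatrix ℝ) *ᵥ (myVec n a0 a1 a2 aL aR) =
      myVec n (a1 + ((n - 3) / 2 : ℕ) * aL) (a0 + a2) (a1 + ((n - 3) / 2 : ℕ) * aR) a0 a2 := by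
  set k := (n - 3) / 2 with hk
  have hn23 : n = 2 * k + 3 := by obtain ⟨m, hm⟩ := hodd; omega
  have hk4 : 4 ≤ k := by omega
  funext i
  have hi := i.isLt
  have hexp : ((doubleBroom n).adjMatrix ℝ *ᵥ myVec n a0 a1 a2 aL aR) i =
      ∑ j : Fin n, (if (doubleBroom n).Adj i j then 1 else 0) * myVec n a0 a1 a2 aL aR j := by
    rw [Matrix.mulVec, dotProduct]
    exact Finset.sum_congr rfl fun j _ => by rw [SimpleGraph.adjMatrix_apply]
  rw [hexp]
  by_cases hi0 : i.val = 0
  · have hpt : ∀ j : Fin n, (if (doubleBroom n).Adj i j then 1 else 0) * myVec n a0 a1 a2 aL aR j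
        = (fun m => (if m = 1 then a1 else 0) + (if 3 ≤ m ∧ m < 3 + k then aL else 0)) j.val := by
      intro j
      have hj := j.isLt
      simp only [my_dB_adj, myP, myVec, ← hk]
      split_ifs <;> first | ring1 | (exfalso; omega)
    rw [Finset.sum_congr rfl fun j _ => hpt j, Fin.sum_univ_eq_sum_range
      (fun m => (if m = 1 then a1 else 0) + (if 3 ≤ m ∧ m < 3 + k then aL else 0)) n,
      Finset.sum_add_distrib, my_sum_single (by omega) a1, my_sum_Ico (by omega) aL]
    have : myVec n (a1 + (k:ℝ) * aL) (a0 + a2) (a1 + (k:ℝ) * aR) a0 a2 i = a1 + (k:ℝ) * aL := by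
      simp only [myVec, ← hk]
      rw [if_pos hi0]
    rw [this]
    norm_num
  · by_cases hi1 : i.val = 1
    · have hpt : ∀ j : Fin n, (if (doubleBroom n).Adj i j then 1 else 0) * myVec n a0 a1 a2 aL aR j
          = (fun m => (if m = 0 then a0 else 0) + (if m = 2 then a2 else 0)) j.val := by
        intro j
        have hj := j.isLt
        simp only [my_dB_adj, myP, myVec, ← hk]
        split_ifs <;> first | ring1 | (exfalso; omega)
      rw [Finset.sum_congr rfl fun j _ => hpt j, Fin.sum_univ_eq_sum_range
        (fun m => (if m = 0 then a0 else 0) + (if m = 2 then a2 else 0)) n,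
        Finset.sum_add_distrib, my_sum_single (by omega) a0, my_sum_single (by omega) a2]
      have : myVec n (a1 + (k:ℝ) * aL) (a0 + a2) (a1 + (k:ℝ) * aR) a0 a2 i = a0 + a2 := by
        simp only [myVec, ← hk]
        rw [if_neg (by omega), if_pos hi1]
      rw [this]
    · by_cases hi2 : i.val = 2
      · have hpt : ∀ j : Fin n, (if (doubleBroom n).Adj i j then 1 else 0) * myVec n a0 a1 a2 aL aR j
            = (fun m => (if m = 1 then a1 else 0) + (if 3 + k ≤ m ∧ m < n then aR else 0)) j.val := by
          intro j
          have hj := j.isLt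
          simp only [my_dB_adj, myP, myVec, ← hk]
          split_ifs <;> first | ring1 | (exfalso; omega)
        rw [Finset.sum_congr rfl fun j _ => hpt j, Fin.sum_univ_eq_sum_range
          (fun m => (if m = 1 then a1 else 0) + (if 3 + k ≤ m ∧ m < n then aR else 0)) n,
          Finset.sum_add_distrib, my_sum_single (by omega) a1, my_sum_Ico (le_refl n) aR]
        have : myVec n (a1 + (k:ℝ) * aL) (a0 + a2) (a1 + (k:ℝ) * aR) a0 a2 i
            = a1 + (k:ℝ) * aR := by
          simp only [myVec, ← hk]
          rw [if_neg (by omega), if_neg (by omega), if_pos hi2]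
        rw [this]
        have hcast : ((n - (3 + k) : ℕ) : ℝ) = (k : ℝ) := by
          norm_cast
          omega
        rw [hcast]
      · by_cases hiL : i.val < 3 + k
        · -- left leaf
          have hpt : ∀ j : Fin n, (if (doubleBroom n).Adj i j then 1 else 0) * myVec n a0 a1 a2 aL aR j
              = (fun m => if m = 0 then a0 else 0) j.val := by
            intro j
            have hj := j.isLt
            simp only [my_dB_adj, myP, myVec, ← hk]
            split_ifs <;> first | ring1 | (exfalso; omega)
          rw [Finset.sum_congr rfl fun j _ => hpt j, Fin.sum_univ_eq_sum_range
            (fun m => if m = 0 then a0 else 0) n, my_sum_single (by omega) a0]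
          have : myVec n (a1 + (k:ℝ) * aL) (a0 + a2) (a1 + (k:ℝ) * aR) a0 a2 i = a0 := by
            simp only [myVec, ← hk]
            rw [if_neg hi0, if_neg hi1, if_neg hi2, if_pos hiL]
          rw [this]
        · -- right leaf
          have hpt : ∀ j : Fin n, (if (doubleBroom n).Adj i j then 1 else 0) * myVec n a0 a1 a2 aL aR j
              = (fun m => if m = 2 then a2 else 0) j.val := by
            intro j
            have hj := j.isLt
            simp only [my_dB_adj, myP, myVec, ← hk]
            split_ifs <;> first | ring1 | (exfalso; omega)
          rw [Finset.sum_congr rfl fun j _ => hpt j, Fin.sum_univ_eq_sum_range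
            (fun m => if m = 2 then a2 else 0) n, my_sum_single (by omega) a2]
          have : myVec n (a1 + (k:ℝ) * aL) (a0 + a2) (a1 + (k:ℝ) * aR) a0 a2 i = a2 := by
            simp only [myVec, ← hk]
            rw [if_neg hi0, if_neg hi1, if_neg hi2, if_neg hiL]
          rw [this]

lemma my_smul_myVec {n : ℕ} (s a0 a1 a2 aL aR : ℝ) :
    s • myVec n a0 a1 a2 aL aR = myVec n (s*a0) (s*a1) (s*a2) (s*aL) (s*aR) := by
  funext j
  simp only [Pi.smul_apply, smul_eq_mul, myVec]
  split_ifs <;> rfl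

lemma my_dB_eig1 {n : ℕ} (hn : 10 ≤ n) (hodd : Odd n) :
    ((doubleBroom n).adjMatrix ℝ) *ᵥ
      (myVec n (Real.sqrt ((n - 3) / 2 : ℕ)) 0 (-(Real.sqrt ((n - 3) / 2 : ℕ))) 1 (-1)) =
    Real.sqrt ((n - 3) / 2 : ℕ) •
      (myVec n (Real.sqrt ((n - 3) / 2 : ℕ)) 0 (-(Real.sqrt ((n - 3) / 2 : ℕ))) 1 (-1)) := by
  rw [my_dB_mulVec hn hodd, my_smul_myVec]
  have hss : Real.sqrt ((n - 3) / 2 : ℕ) * Real.sqrt ((n - 3) / 2 : ℕ) = ((n - 3) / 2 : ℕ) :=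
    Real.mul_self_sqrt (Nat.cast_nonneg _)
  funext j
  simp only [myVec]
  split_ifs <;> linarith [hss]

lemma my_dB_eig2 {n : ℕ} (hn : 10 ≤ n) (hodd : Odd n) :
    ((doubleBroom n).adjMatrix ℝ) *ᵥ
      (myVec n (Real.sqrt (((n - 3) / 2 : ℕ) + 2)) 2 (Real.sqrt (((n - 3) / 2 : ℕ) + 2)) 1 1) =
    Real.sqrt (((n - 3) / 2 : ℕ) + 2) •
      (myVec n (Real.sqrt (((n - 3) / 2 : ℕ) + 2)) 2 (Real.sqrt (((n - 3) / 2 : ℕ) + 2)) 1 1) := by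
  rw [my_dB_mulVec hn hodd, my_smul_myVec]
  have hss : Real.sqrt (((n - 3) / 2 : ℕ) + 2) * Real.sqrt (((n - 3) / 2 : ℕ) + 2)
      = ((n - 3) / 2 : ℕ) + 2 := Real.mul_self_sqrt (by positivity)
  funext j
  simp only [myVec]
  split_ifs <;> linarith [hss]

lemma my_myVec_ne_zero {n : ℕ} (hn : 10 ≤ n) (a0 a1 a2 aL aR : ℝ) (hL : aL ≠ 0) :
    myVec n a0 a1 a2 aL aR ≠ 0 := by
  intro h
  have h3 : myVec n a0 a1 a2 aL aR ⟨3, by omega⟩ = 0 := by rw [h]; rfl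
  have hk : 4 ≤ (n - 3) / 2 → True := fun _ => trivial
  simp only [myVec] at h3
  rw [if_neg (by norm_num), if_neg (by norm_num), if_neg (by norm_num)] at h3
  rw [if_pos] at h3
  · exact hL h3
  · show (3 : ℕ) < 3 + (n - 3) / 2
    omega


lemma my_has_eig (G : SimpleGraph (Fin N)) (μ : ℝ) (y : Fin N → ℝ) (hy : y ≠ 0)
    (heq : (G.adjMatrix ℝ) *ᵥ y = μ • y) : ∃ i, (my_adjH G).eigenvalues i = μ := by
  by_contra hcon
  push_neg at hcon
  set hA := my_adjH G
  set b := hA.eigenvectorBasis with hb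
  have hAt : (G.adjMatrix ℝ)ᵀ = G.adjMatrix ℝ := SimpleGraph.transpose_adjMatrix _
  have hdot : ∀ i, (⇑(b i) : Fin N → ℝ) ⬝ᵥ y = 0 := by
    intro i
    have h1 : (⇑(b i) : Fin N → ℝ) ⬝ᵥ ((G.adjMatrix ℝ) *ᵥ y) = μ * ((⇑(b i) : Fin N → ℝ) ⬝ᵥ y) := by
      rw [heq, dotProduct_smul, smul_eq_mul]
    have h2 : (⇑(b i) : Fin N → ℝ) ⬝ᵥ ((G.adjMatrix ℝ) *ᵥ y) =
        (hA.eigenvalues i) * ((⇑(b i) : Fin N → ℝ) ⬝ᵥ y) := by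
      rw [dotProduct_mulVec]
      have hvm : (⇑(b i) : Fin N → ℝ) ᵥ* (G.adjMatrix ℝ) = (G.adjMatrix ℝ) *ᵥ ⇑(b i) := by
        conv_rhs => rw [← hAt]
        rw [Matrix.mulVec_transpose]
      rw [hvm, hA.mulVec_eigenvectorBasis, smul_dotProduct, smul_eq_mul]
    have h3 : (hA.eigenvalues i - μ) * ((⇑(b i) : Fin N → ℝ) ⬝ᵥ y) = 0 := by
      rw [sub_mul, ← h1, ← h2]
      ring
    rcases mul_eq_zero.1 h3 with h | h
    · exact absurd (by linarith : hA.eigenvalues i = μ) (hcon i)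
    · exact h
  apply hy
  have hrepr : b.repr (WithLp.toLp 2 y) = 0 := by
    ext i
    rw [OrthonormalBasis.repr_apply_apply]
    exact (my_dot_inner (b i) (WithLp.toLp 2 y)).symm.trans (hdot i)
  have := b.repr.map_eq_zero_iff.1 hrepr
  exact (WithLp.toLp_eq_zero 2).1 this

lemma my_dB_lam_ge {n : ℕ} (hn : 10 ≤ n) (hodd : Odd n) :
    Real.sqrt (((n - 3) / 2 : ℕ)) ≤ lam (doubleBroom n) 2 := by
  obtain ⟨i, hi⟩ := my_has_eig (doubleBroom n) _ _
    (my_myVec_ne_zero hn _ _ _ _ _ one_ne_zero) (my_dB_eig1 hn hodd)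
  obtain ⟨j, hj⟩ := my_has_eig (doubleBroom n) _ _
    (my_myVec_ne_zero hn _ _ _ _ _ one_ne_zero) (my_dB_eig2 hn hodd)
  have hlt : Real.sqrt (((n - 3) / 2 : ℕ)) < Real.sqrt ((((n - 3) / 2 : ℕ) : ℝ) + 2) :=
    Real.sqrt_lt_sqrt (Nat.cast_nonneg _) (by linarith)
  have hij : i ≠ j := by
    intro h
    rw [h, hj] at hi
    exact absurd hi (ne_of_gt hlt)
  exact my_lam_two_ge (doubleBroom n) (by omega) _ i j hij (le_of_eq hi.symm)
    (le_of_eq hj.symm |>.trans' (le_of_lt hlt))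

lemma my_dB_lam_le {n : ℕ} (hn : 10 ≤ n) (hodd : Odd n) :
    lam (doubleBroom n) 2 ≤ Real.sqrt (((n - 3) / 2 : ℕ)) :=
  my_main ((n - 3) / 2) (by omega) my_dB_hcom my_dB_htri (myV1 n hn) (my_dB_good hn hodd)



/-- For odd `n ≥ 10` and any tree `T` on `n` vertices, `λ₂(T) ≤ √((n−3)/2)`;
equality holds for the caterpillar `T((n−3)/2, 0, (n−3)/2)`. -/
theorem stmt_18 {n : ℕ} (hn : 10 ≤ n) (hodd : Odd n)
    (T : SimpleGraph (Fin n)) (hT : T.IsTree) :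
    lam T 2 ≤ Real.sqrt (((n : ℝ) - 3) / 2) ∧
      lam (doubleBroom n) 2 = Real.sqrt (((n : ℝ) - 3) / 2) := by
  have hcast : ((n : ℝ) - 3) / 2 = (((n - 3) / 2 : ℕ) : ℝ) := by
    obtain ⟨m, hm⟩ := hodd
    have h1 : (n - 3) / 2 = m - 1 := by omega
    have h2 : (n : ℝ) = 2 * (m : ℝ) + 1 := by
      rw [hm]; push_cast; ring
    have h3 : ((m - 1 : ℕ) : ℝ) = (m : ℝ) - 1 := by
      have : 1 ≤ m := by omega
      push_cast [this]; ring
    rw [h1, h2, h3]; ring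
  constructor
  · exact my_tree_lam T hT hn hodd
  · rw [hcast]
    exact le_antisymm (my_dB_lam_le hn hodd) (my_dB_lam_ge hn hodd)

end
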